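/- Suppose x' = A(t)x admits a strong exponential dichotomy with respect to a family of norms ‖·‖_t with constants D, λ, λ̄, where ‖x‖ ≤ ‖x‖_t ≤ Ce^{ε|t|}‖x‖, and let Y_∞ and the bounded invertible operator 𝔸 be as defined. Then every real number μ with e^{−λ} < |μ| < e^{λ} lies in the resolvent set of 𝔸; that is, μ·Id − 𝔸 is an invertible bounded operator on Y_∞. In particular, 𝔸 is hyperbolic in the sense that ±1 do not belong to its spectrum. -/

import Mathlib

/- STATEMENT 4: Under a strong exponential dichotomy (w.r.t. a family of norms)
with exponent λ, every real μ with e^{-λ} < |μ| < e^{λ} lies in the resolvent set of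
the discretized operator 𝔸 on Y_∞; in particular 𝔸 is hyperbolic (±1 ∉ σ(𝔸)). -/

noncomputable section

/-- `ℝ^d` -/
abbrev Ed (d : ℕ) := Fin d → ℝ

/-- A family of norms on `ℝ^d` indexed by `ℤ`, each bounded below by the ambient norm
(so each seminorm is in fact a norm). -/
structure NormFamily (d : ℕ) where
  N : ℤ → Seminorm ℝ (Ed d)
  lower : ∀ (n : ℤ) (x : Ed d), ‖x‖ ≤ N n x

variable {d : ℕ}

/-- The submodule of two-sided sequences with bounded weighted norms. -/
def YinfSubmodule (𝒩 : NormFamily d) : Submodule ℝ (ℤ → Ed d) where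
  carrier := {x | ∃ C : ℝ, ∀ n : ℤ, 𝒩.N n (x n) ≤ C}
  add_mem' := by
    rintro x y ⟨Cx, hx⟩ ⟨Cy, hy⟩
    exact ⟨Cx + Cy, fun n => le_trans (map_add_le_add _ _ _) (add_le_add (hx n) (hy n))⟩
  zero_mem' := ⟨0, fun n => by simp⟩
  smul_mem' := by
    rintro c x ⟨Cx, hx⟩
    refine ⟨‖c‖ * Cx, fun n => ?_⟩
    rw [Pi.smul_apply, map_smul_eq_mul]
    exact mul_le_mul_of_nonneg_left (hx n) (norm_nonneg c)

/-- The Banach space `Y_∞` of sequences bounded with respect to the family of norms,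
equipped with the norm `‖x‖ = sup_n ‖x_n‖_n`. -/
def Yinf (𝒩 : NormFamily d) : Type := ↥(YinfSubmodule 𝒩)

instance (𝒩 : NormFamily d) : AddCommGroup (Yinf 𝒩) :=
  inferInstanceAs (AddCommGroup (YinfSubmodule 𝒩))

instance (𝒩 : NormFamily d) : Module ℝ (Yinf 𝒩) :=
  inferInstanceAs (Module ℝ (YinfSubmodule 𝒩))

namespace Yinf

variable {𝒩 : NormFamily d}

/-- The underlying sequence. -/
def seq (x : Yinf 𝒩) : ℤ → Ed d := x.1

lemma bddAbove (x : Yinf 𝒩) : BddAbove (Set.range fun n => 𝒩.N n (x.seq n)) := by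
  obtain ⟨C, hC⟩ := x.2
  exact ⟨C, by rintro _ ⟨n, rfl⟩; exact hC n⟩

@[simp] lemma seq_add (x y : Yinf 𝒩) (n : ℤ) : (x + y).seq n = x.seq n + y.seq n := rfl
@[simp] lemma seq_neg (x : Yinf 𝒩) (n : ℤ) : (-x).seq n = -(x.seq n) := rfl
@[simp] lemma seq_smul (c : ℝ) (x : Yinf 𝒩) (n : ℤ) : (c • x).seq n = c • (x.seq n) := rfl
@[simp] lemma seq_zero (n : ℤ) : (0 : Yinf 𝒩).seq n = 0 := rfl

instance : NormedAddCommGroup (Yinf 𝒩) :=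
  AddGroupNorm.toNormedAddCommGroup
    { toFun := fun x => ⨆ n : ℤ, 𝒩.N n (x.seq n)
      map_zero' := by simp
      add_le' := by
        intro x y
        refine ciSup_le fun n => ?_
        calc 𝒩.N n ((x + y).seq n) = 𝒩.N n (x.seq n + y.seq n) := by rw [seq_add]
          _ ≤ 𝒩.N n (x.seq n) + 𝒩.N n (y.seq n) := map_add_le_add _ _ _
          _ ≤ _ := add_le_add (le_ciSup x.bddAbove n) (le_ciSup y.bddAbove n)
      neg' := by
        intro x
        refine iSup_congr fun n => ?_
        rw [seq_neg, map_neg_eq_map]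
      eq_zero_of_map_eq_zero' := by
        intro x hx
        have h0 : ∀ n : ℤ, x.seq n = 0 := by
          intro n
          have h1 : 𝒩.N n (x.seq n) ≤ 0 := hx ▸ le_ciSup x.bddAbove n
          have h2 : ‖x.seq n‖ ≤ 0 := le_trans (𝒩.lower n _) h1
          exact norm_le_zero_iff.mp h2
        apply Subtype.ext
        funext n
        exact h0 n }

lemma norm_def (x : Yinf 𝒩) : ‖x‖ = ⨆ n : ℤ, 𝒩.N n (x.seq n) := rfl

instance : NormedSpace ℝ (Yinf 𝒩) where
  norm_smul_le c x := by
    rw [norm_def, norm_def]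
    rw [Real.mul_iSup_of_nonneg (norm_nonneg c)]
    refine ciSup_le fun n => ?_
    rw [seq_smul, map_smul_eq_mul]
    have hb : BddAbove (Set.range fun m : ℤ => ‖c‖ * 𝒩.N m (x.seq m)) := by
      obtain ⟨C, hC⟩ := x.bddAbove
      refine ⟨‖c‖ * C, ?_⟩
      rintro _ ⟨m, rfl⟩
      exact mul_le_mul_of_nonneg_left (hC ⟨m, rfl⟩) (norm_nonneg c)
    exact le_ciSup hb n

end Yinf

/-- A (possibly rescaled) evolution family `S` admits a strong exponential dichotomy
with respect to the family of norms `N t`. -/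
def SEDfam (d : ℕ) (S : ℝ → ℝ → Ed d → Ed d) (N : ℝ → Seminorm ℝ (Ed d)) : Prop :=
  ∃ (Q : ℝ → Ed d →L[ℝ] Ed d) (K lam lamBar : ℝ),
    0 < K ∧ 0 < lam ∧ lam ≤ lamBar ∧
    (∀ t, (Q t).comp (Q t) = Q t) ∧
    (∀ t s x, S t s (Q s x) = Q t (S t s x)) ∧
    (∀ t s x, s ≤ t → N t (S t s (Q s x)) ≤ K * Real.exp (-lam * (t - s)) * N s x) ∧
    (∀ t s x, t ≤ s → N t (S t s (x - Q s x)) ≤ K * Real.exp (-lam * (s - t)) * N s x) ∧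
    (∀ t s x, N t (S t s x) ≤ K * Real.exp (lamBar * |t - s|) * N s x)

section Helpers
open Filter Topology

variable {d : ℕ}

lemma seminorm_cont (p : Seminorm ℝ (Ed d)) (M : ℝ)
    (hb : ∀ x, p x ≤ M * ‖x‖) : Continuous p := by
  have hlip : LipschitzWith (Real.toNNReal M) p := by
    refine LipschitzWith.of_dist_le_mul fun x y => ?_
    rw [Real.dist_eq, dist_eq_norm]
    have h1 : ∀ a b : Ed d, p a - p b ≤ p (a - b) := by
      intro a b
      have := map_add_le_add p (a - b) b
      rw [sub_add_cancel] at this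
      linarith
    have h2 : p (y - x) = p (x - y) := by rw [← neg_sub, map_neg_eq_map]
    have habs : |p x - p y| ≤ p (x - y) := by
      rw [abs_sub_le_iff]
      exact ⟨h1 x y, h2 ▸ h1 y x⟩
    calc |p x - p y| ≤ p (x - y) := habs
      _ ≤ M * ‖x - y‖ := hb _
      _ ≤ Real.toNNReal M * ‖x - y‖ :=
          mul_le_mul_of_nonneg_right (Real.le_coe_toNNReal M) (norm_nonneg _)
  exact hlip.continuous

lemma seminorm_tsum_le (p : Seminorm ℝ (Ed d)) (hp : Continuous p)
    (f : ℕ → Ed d) (g : ℕ → ℝ) (hf : Summable f) (hg : Summable g)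
    (hfg : ∀ k, p (f k) ≤ g k) : p (∑' k, f k) ≤ ∑' k, g k := by
  have ht : Tendsto (fun s : Finset ℕ => p (∑ i ∈ s, f i)) atTop (𝓝 (p (∑' k, f k))) :=
    (hp.tendsto _).comp hf.hasSum
  refine le_of_tendsto ht (Filter.Eventually.of_forall fun s => ?_)
  calc p (∑ i ∈ s, f i) ≤ ∑ i ∈ s, p (f i) :=
        Finset.le_sum_of_subadditive p (le_of_eq (map_zero p)) (map_add_le_add p) s f
    _ ≤ ∑ i ∈ s, g i := Finset.sum_le_sum fun i _ => hfg i
    _ ≤ ∑' k, g k := Summable.sum_le_tsum s (fun i _ => le_trans (apply_nonneg p _) (hfg i)) hg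

lemma summable_of_seminorm_geom (p : Seminorm ℝ (Ed d))
    (hlow : ∀ x : Ed d, ‖x‖ ≤ p x) (f : ℕ → Ed d) (c r : ℝ) (hr0 : 0 ≤ r) (hr1 : r < 1)
    (hb : ∀ k, p (f k) ≤ c * r ^ k) : Summable f :=
  Summable.of_norm_bounded ((summable_geometric_of_lt_one hr0 hr1).mul_left c)
    fun k => (hlow _).trans (hb k)

def fSt (T : ℝ → ℝ → Ed d →L[ℝ] Ed d) (P : ℝ → Ed d →L[ℝ] Ed d)
    (x : ℤ → Ed d) (n : ℤ) (k : ℕ) : Ed d :=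
  T (n : ℝ) ((n - k : ℤ) : ℝ) (P ((n - k : ℤ) : ℝ) (x (n - k)))

def fUn (T : ℝ → ℝ → Ed d →L[ℝ] Ed d) (P : ℝ → Ed d →L[ℝ] Ed d)
    (x : ℤ → Ed d) (n : ℤ) (k : ℕ) : Ed d :=
  T (n : ℝ) ((n + k : ℤ) : ℝ) (x (n + k) - P ((n + k : ℤ) : ℝ) (x (n + k)))

def Sst (T : ℝ → ℝ → Ed d →L[ℝ] Ed d) (P : ℝ → Ed d →L[ℝ] Ed d) (μ : ℝ)
    (x : ℤ → Ed d) (n : ℤ) : Ed d := ∑' k : ℕ, (μ⁻¹) ^ (k + 1) • fSt T P x n k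

def Sun (T : ℝ → ℝ → Ed d →L[ℝ] Ed d) (P : ℝ → Ed d →L[ℝ] Ed d) (μ : ℝ)
    (x : ℤ → Ed d) (n : ℤ) : Ed d := ∑' k : ℕ, μ ^ k • fUn T P x n (k + 1)

def GOp (T : ℝ → ℝ → Ed d →L[ℝ] Ed d) (P : ℝ → Ed d →L[ℝ] Ed d) (μ : ℝ)
    (x : ℤ → Ed d) (n : ℤ) : Ed d := Sst T P μ x n - Sun T P μ x n

variable {T : ℝ → ℝ → Ed d →L[ℝ] Ed d} {P : ℝ → Ed d →L[ℝ] Ed d}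

lemma fSt_add (a b : ℤ → Ed d) (n : ℤ) (k : ℕ) :
    fSt T P (fun m => a m + b m) n k = fSt T P a n k + fSt T P b n k := by
  simp [fSt]

lemma fSt_smul (c : ℝ) (a : ℤ → Ed d) (n : ℤ) (k : ℕ) :
    fSt T P (fun m => c • a m) n k = c • fSt T P a n k := by
  simp [fSt]

lemma fUn_add (a b : ℤ → Ed d) (n : ℤ) (k : ℕ) :
    fUn T P (fun m => a m + b m) n k = fUn T P a n k + fUn T P b n k := by
  simp only [fUn]
  have h : a (n + k) + b (n + k) - P ((n + k : ℤ) : ℝ) (a (n + k) + b (n + k)) =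
      (a (n + k) - P ((n + k : ℤ) : ℝ) (a (n + k))) +
      (b (n + k) - P ((n + k : ℤ) : ℝ) (b (n + k))) := by
    rw [map_add]; abel
  rw [h, map_add]

lemma fUn_smul (c : ℝ) (a : ℤ → Ed d) (n : ℤ) (k : ℕ) :
    fUn T P (fun m => c • a m) n k = c • fUn T P a n k := by
  simp only [fUn]
  have h : c • a (n + k) - P ((n + k : ℤ) : ℝ) (c • a (n + k)) =
      c • (a (n + k) - P ((n + k : ℤ) : ℝ) (a (n + k))) := by
    rw [map_smul, smul_sub]
  rw [h, map_smul]

lemma fSt_zero_k (hT_id : ∀ t, T t t = ContinuousLinearMap.id ℝ (Ed d))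
    (a : ℤ → Ed d) (n : ℤ) : fSt T P a n 0 = P (n : ℝ) (a n) := by
  simp [fSt, hT_id]

lemma fUn_zero_k (hT_id : ∀ t, T t t = ContinuousLinearMap.id ℝ (Ed d))
    (a : ℤ → Ed d) (n : ℤ) : fUn T P a n 0 = a n - P (n : ℝ) (a n) := by
  simp [fUn, hT_id]

lemma fSt_shift (hT_comp : ∀ t s r, (T t s).comp (T s r) = T t r)
    (a : ℤ → Ed d) (n : ℤ) (k : ℕ) :
    T (n : ℝ) ((n - 1 : ℤ) : ℝ) (fSt T P a (n - 1) k) = fSt T P a n (k + 1) := by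
  simp only [fSt]
  have hz : (n - 1 - (k : ℕ) : ℤ) = (n - ((k : ℕ) + 1 : ℕ) : ℤ) := by push_cast; ring
  rw [hz]
  have h := DFunLike.congr_fun
    (hT_comp (n : ℝ) ((n - 1 : ℤ) : ℝ) ((n - ((k : ℕ) + 1 : ℕ) : ℤ) : ℝ))
    (P ((n - ((k : ℕ) + 1 : ℕ) : ℤ) : ℝ) (a (n - ((k : ℕ) + 1 : ℕ))))
  simpa using h

lemma fUn_shift (hT_comp : ∀ t s r, (T t s).comp (T s r) = T t r)
    (a : ℤ → Ed d) (n : ℤ) (k : ℕ) :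
    T (n : ℝ) ((n - 1 : ℤ) : ℝ) (fUn T P a (n - 1) (k + 1)) = fUn T P a n k := by
  simp only [fUn]
  have hz : (n - 1 + ((k : ℕ) + 1 : ℕ) : ℤ) = (n + (k : ℕ) : ℤ) := by push_cast; ring
  rw [hz]
  have h := DFunLike.congr_fun
    (hT_comp (n : ℝ) ((n - 1 : ℤ) : ℝ) ((n + (k : ℕ) : ℤ) : ℝ))
    (a (n + (k : ℕ)) - P ((n + (k : ℕ) : ℤ) : ℝ) (a (n + (k : ℕ))))
  simpa using h

lemma Sst_add {μ : ℝ} (a b : ℤ → Ed d) (n : ℤ)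
    (hA : Summable fun k : ℕ => (μ⁻¹) ^ (k + 1) • fSt T P a n k)
    (hB : Summable fun k : ℕ => (μ⁻¹) ^ (k + 1) • fSt T P b n k) :
    Sst T P μ (fun m => a m + b m) n = Sst T P μ a n + Sst T P μ b n := by
  simp only [Sst]
  rw [← Summable.tsum_add hA hB]
  congr 1; funext k; rw [fSt_add, smul_add]

lemma Sun_add {μ : ℝ} (a b : ℤ → Ed d) (n : ℤ)
    (hA : Summable fun k : ℕ => μ ^ k • fUn T P a n (k + 1))
    (hB : Summable fun k : ℕ => μ ^ k • fUn T P b n (k + 1)) :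
    Sun T P μ (fun m => a m + b m) n = Sun T P μ a n + Sun T P μ b n := by
  simp only [Sun]
  rw [← Summable.tsum_add hA hB]
  congr 1; funext k; rw [fUn_add, smul_add]

lemma Sst_smul {μ : ℝ} (c : ℝ) (a : ℤ → Ed d) (n : ℤ)
    (hA : Summable fun k : ℕ => (μ⁻¹) ^ (k + 1) • fSt T P a n k) :
    Sst T P μ (fun m => c • a m) n = c • Sst T P μ a n := by
  simp only [Sst]
  rw [← Summable.tsum_const_smul c hA]
  congr 1; funext k; rw [fSt_smul, smul_comm]

lemma Sun_smul {μ : ℝ} (c : ℝ) (a : ℤ → Ed d) (n : ℤ)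
    (hA : Summable fun k : ℕ => μ ^ k • fUn T P a n (k + 1)) :
    Sun T P μ (fun m => c • a m) n = c • Sun T P μ a n := by
  simp only [Sun]
  rw [← Summable.tsum_const_smul c hA]
  congr 1; funext k; rw [fUn_smul, smul_comm]

lemma key_st (hT_id : ∀ t, T t t = ContinuousLinearMap.id ℝ (Ed d))
    (hT_comp : ∀ t s r, (T t s).comp (T s r) = T t r)
    {μ : ℝ} (hμ0 : μ ≠ 0) (a : ℤ → Ed d) (n : ℤ)
    (hsum : ∀ m : ℤ, Summable fun k : ℕ => (μ⁻¹) ^ (k + 1) • fSt T P a m k)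
    (hg : Summable fun k : ℕ => (μ⁻¹) ^ k • fSt T P a n k) :
    μ • Sst T P μ a n - T (n : ℝ) ((n - 1 : ℤ) : ℝ) (Sst T P μ a (n - 1)) =
      P (n : ℝ) (a n) := by
  have hstep1 : μ • Sst T P μ a n = ∑' k : ℕ, (μ⁻¹) ^ k • fSt T P a n k := by
    simp only [Sst]
    rw [← Summable.tsum_const_smul μ (hsum n)]
    congr 1; funext k
    rw [smul_smul]
    congr 1
    rw [pow_succ]
    field_simp
  have hstep2 : T (n : ℝ) ((n - 1 : ℤ) : ℝ) (Sst T P μ a (n - 1)) =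
      ∑' k : ℕ, (μ⁻¹) ^ (k + 1) • fSt T P a n (k + 1) := by
    simp only [Sst]
    rw [(T (n : ℝ) ((n - 1 : ℤ) : ℝ)).map_tsum (hsum (n - 1))]
    congr 1; funext k
    rw [map_smul, fSt_shift hT_comp]
  calc μ • Sst T P μ a n - T (n : ℝ) ((n - 1 : ℤ) : ℝ) (Sst T P μ a (n - 1))
      = (∑' k : ℕ, (μ⁻¹) ^ k • fSt T P a n k) -
        ∑' k : ℕ, (μ⁻¹) ^ (k + 1) • fSt T P a n (k + 1) := by rw [hstep1, hstep2]
    _ = ((μ⁻¹) ^ 0 • fSt T P a n 0 + ∑' k : ℕ, (μ⁻¹) ^ (k + 1) • fSt T P a n (k + 1)) -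
        ∑' k : ℕ, (μ⁻¹) ^ (k + 1) • fSt T P a n (k + 1) := by rw [Summable.tsum_eq_zero_add hg]
    _ = (μ⁻¹) ^ 0 • fSt T P a n 0 := by abel
    _ = P (n : ℝ) (a n) := by rw [pow_zero, one_smul, fSt_zero_k hT_id]

lemma key_un (hT_id : ∀ t, T t t = ContinuousLinearMap.id ℝ (Ed d))
    (hT_comp : ∀ t s r, (T t s).comp (T s r) = T t r)
    {μ : ℝ} (a : ℤ → Ed d) (n : ℤ)
    (hsum : ∀ m : ℤ, Summable fun k : ℕ => μ ^ k • fUn T P a m (k + 1))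
    (hw : Summable fun k : ℕ => μ ^ k • fUn T P a n k) :
    μ • Sun T P μ a n - T (n : ℝ) ((n - 1 : ℤ) : ℝ) (Sun T P μ a (n - 1)) =
      -(a n - P (n : ℝ) (a n)) := by
  have hstep1 : μ • Sun T P μ a n = ∑' k : ℕ, μ ^ (k + 1) • fUn T P a n (k + 1) := by
    simp only [Sun]
    rw [← Summable.tsum_const_smul μ (hsum n)]
    congr 1; funext k
    rw [smul_smul, ← pow_succ']
  have hstep2 : T (n : ℝ) ((n - 1 : ℤ) : ℝ) (Sun T P μ a (n - 1)) =
      ∑' k : ℕ, μ ^ k • fUn T P a n k := by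
    simp only [Sun]
    rw [(T (n : ℝ) ((n - 1 : ℤ) : ℝ)).map_tsum (hsum (n - 1))]
    congr 1; funext k
    rw [map_smul, fUn_shift hT_comp]
  calc μ • Sun T P μ a n - T (n : ℝ) ((n - 1 : ℤ) : ℝ) (Sun T P μ a (n - 1))
      = (∑' k : ℕ, μ ^ (k + 1) • fUn T P a n (k + 1)) -
        ∑' k : ℕ, μ ^ k • fUn T P a n k := by rw [hstep1, hstep2]
    _ = (∑' k : ℕ, μ ^ (k + 1) • fUn T P a n (k + 1)) -
        (μ ^ 0 • fUn T P a n 0 + ∑' k : ℕ, μ ^ (k + 1) • fUn T P a n (k + 1)) := by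
          rw [Summable.tsum_eq_zero_add hw]
    _ = -(μ ^ 0 • fUn T P a n 0) := by abel
    _ = -(a n - P (n : ℝ) (a n)) := by rw [pow_zero, one_smul, fUn_zero_k hT_id]

end Helpers

theorem annulus_around_unit_circle_in_resolvent_set (d : ℕ)
    -- the linear equation x' = A(t) x and its evolution family T(t,s)
    (A : ℝ → Ed d →L[ℝ] Ed d) (T : ℝ → ℝ → Ed d →L[ℝ] Ed d)
    (hT_id : ∀ t, T t t = ContinuousLinearMap.id ℝ (Ed d))
    (hT_comp : ∀ t s r, (T t s).comp (T s r) = T t r)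
    (hT_deriv : ∀ s x t, HasDerivAt (fun τ => T τ s x) (A t (T t s x)) t)
    -- the family of norms ‖·‖_t = N t with its comparison constants
    (N : ℝ → Seminorm ℝ (Ed d)) (C eps : ℝ) (hC : 0 < C) (heps : 0 ≤ eps)
    (hlowN : ∀ (t : ℝ) (x : Ed d), ‖x‖ ≤ N t x)
    (hupN : ∀ (t : ℝ) (x : Ed d), N t x ≤ C * Real.exp (eps * |t|) * ‖x‖)
    -- x' = A(t)x admits a strong exponential dichotomy w.r.t. the norms ‖·‖_t,
    -- with projections P(t) and constants D, λ, λ̄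
    (P : ℝ → Ed d →L[ℝ] Ed d) (D lam lamBar : ℝ)
    (hD : 0 < D) (hlam : 0 < lam) (hll : lam ≤ lamBar)
    (hP_proj : ∀ t, (P t).comp (P t) = P t)
    (hP_comm : ∀ t s, (T t s).comp (P s) = (P t).comp (T t s))
    (hs : ∀ (t s : ℝ) (x : Ed d), s ≤ t →
      N t (T t s (P s x)) ≤ D * Real.exp (-lam * (t - s)) * N s x)
    (hu : ∀ (t s : ℝ) (x : Ed d), t ≤ s →
      N t (T t s (x - P s x)) ≤ D * Real.exp (-lam * (s - t)) * N s x)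
    (hg : ∀ (t s : ℝ) (x : Ed d),
      N t (T t s x) ≤ D * Real.exp (lamBar * |t - s|) * N s x)
    -- the norms at integer times, and the Banach space Y_∞
    (𝒩 : NormFamily d) (h𝒩 : ∀ n : ℤ, 𝒩.N n = N (n : ℝ))
    -- the bounded invertible operator 𝔸 on Y_∞, (𝔸 x)_n = A_{n-1} x_{n-1} = T(n,n-1) x_{n-1}
    (𝔸 : Yinf 𝒩 →L[ℝ] Yinf 𝒩) (h𝔸inv : IsUnit 𝔸)
    (h𝔸 : ∀ (x : Yinf 𝒩) (n : ℤ),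
      (𝔸 x).seq n = T (n : ℝ) ((n - 1 : ℤ) : ℝ) (x.seq (n - 1)))
    :
    -- every μ with e^{-λ} < |μ| < e^{λ} is in the resolvent set of 𝔸,
    -- i.e. μ·Id − 𝔸 is an invertible bounded operator on Y_∞
    (∀ μ : ℝ, Real.exp (-lam) < |μ| → |μ| < Real.exp lam →
      μ ∉ spectrum ℝ 𝔸 ∧ IsUnit (algebraMap ℝ (Yinf 𝒩 →L[ℝ] Yinf 𝒩) μ - 𝔸)) ∧
    -- in particular 𝔸 is hyperbolic: ±1 do not belong to its spectrum
    (1 : ℝ) ∉ spectrum ℝ 𝔸 ∧ (-1 : ℝ) ∉ spectrum ℝ 𝔸 := by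
  have main : ∀ μ : ℝ, Real.exp (-lam) < |μ| → |μ| < Real.exp lam →
      IsUnit (algebraMap ℝ (Yinf 𝒩 →L[ℝ] Yinf 𝒩) μ - 𝔸) := by
    intro μ hμ1 hμ2
    have hexp : (0:ℝ) < Real.exp (-lam) := Real.exp_pos _
    have hμpos : 0 < |μ| := lt_trans hexp hμ1
    have hμ0 : μ ≠ 0 := by
      intro h; rw [h, abs_zero] at hμpos; exact lt_irrefl _ hμpos
    set r1 : ℝ := Real.exp (-lam) * |μ|⁻¹ with hr1def
    set r2 : ℝ := |μ| * Real.exp (-lam) with hr2def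
    have hr1nn : 0 ≤ r1 := by positivity
    have hr2nn : 0 ≤ r2 := by positivity
    have hr1lt : r1 < 1 := by
      rw [hr1def, ← div_eq_mul_inv, div_lt_one hμpos]; exact hμ1
    have hr2lt : r2 < 1 := by
      have h := mul_lt_mul_of_pos_right hμ2 hexp
      rwa [← Real.exp_add, add_neg_cancel, Real.exp_zero] at h
    have hcont : ∀ n : ℤ, Continuous (N (n:ℝ)) := fun n =>
      seminorm_cont _ _ (hupN (n:ℝ))
    have hbd : ∀ (y : Yinf 𝒩) (m : ℤ), N (m:ℝ) (y.seq m) ≤ ‖y‖ := by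
      intro y m
      have h := le_ciSup y.bddAbove m
      rw [← h𝒩 m]
      exact h
    -- pointwise dichotomy bounds on the kernel terms
    have hfSt_bd : ∀ (x : ℤ → Ed d) (B : ℝ), (∀ m : ℤ, N (m:ℝ) (x m) ≤ B) →
        ∀ (n : ℤ) (k : ℕ), N (n:ℝ) (fSt T P x n k) ≤ D * B * Real.exp (-lam) ^ k := by
      intro x B hbx n k
      have hle : ((n - k : ℤ) : ℝ) ≤ (n : ℝ) := by
        push_cast; linarith [Nat.cast_nonneg (α := ℝ) k]
      have h1 := hs (n:ℝ) ((n - k : ℤ):ℝ) (x (n - k)) hle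
      have harg : -lam * ((n:ℝ) - ((n - k : ℤ):ℝ)) = (k : ℕ) * (-lam) := by
        push_cast; ring
      rw [harg, Real.exp_nat_mul] at h1
      simp only [fSt]
      calc N (n:ℝ) (T (n:ℝ) ((n - k : ℤ):ℝ) (P ((n - k : ℤ):ℝ) (x (n - k))))
          ≤ D * Real.exp (-lam) ^ k * N ((n - k : ℤ):ℝ) (x (n - k)) := h1
        _ ≤ D * Real.exp (-lam) ^ k * B := by
            apply mul_le_mul_of_nonneg_left (hbx (n - k)); positivity
        _ = D * B * Real.exp (-lam) ^ k := by ring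
    have hfUn_bd : ∀ (x : ℤ → Ed d) (B : ℝ), (∀ m : ℤ, N (m:ℝ) (x m) ≤ B) →
        ∀ (n : ℤ) (k : ℕ), N (n:ℝ) (fUn T P x n k) ≤ D * B * Real.exp (-lam) ^ k := by
      intro x B hbx n k
      have hle : (n : ℝ) ≤ ((n + k : ℤ) : ℝ) := by
        push_cast; linarith [Nat.cast_nonneg (α := ℝ) k]
      have h1 := hu (n:ℝ) ((n + k : ℤ):ℝ) (x (n + k)) hle
      have harg : -lam * (((n + k : ℤ):ℝ) - (n:ℝ)) = (k : ℕ) * (-lam) := by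
        push_cast; ring
      rw [harg, Real.exp_nat_mul] at h1
      simp only [fUn]
      calc N (n:ℝ) (T (n:ℝ) ((n + k : ℤ):ℝ) (x (n + k) - P ((n + k : ℤ):ℝ) (x (n + k))))
          ≤ D * Real.exp (-lam) ^ k * N ((n + k : ℤ):ℝ) (x (n + k)) := h1
        _ ≤ D * Real.exp (-lam) ^ k * B := by
            apply mul_le_mul_of_nonneg_left (hbx (n + k)); positivity
        _ = D * B * Real.exp (-lam) ^ k := by ring
    -- geometric bounds for the four relevant series
    have hstb : ∀ (x : ℤ → Ed d) (B : ℝ), (∀ m : ℤ, N (m:ℝ) (x m) ≤ B) →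
        ∀ (n : ℤ) (k : ℕ),
        N (n:ℝ) ((μ⁻¹) ^ (k + 1) • fSt T P x n k) ≤ (D * B * |μ|⁻¹) * r1 ^ k := by
      intro x B hbx n k
      rw [map_smul_eq_mul, Real.norm_eq_abs, abs_pow, abs_inv]
      calc |μ|⁻¹ ^ (k + 1) * N (n:ℝ) (fSt T P x n k)
          ≤ |μ|⁻¹ ^ (k + 1) * (D * B * Real.exp (-lam) ^ k) := by
            apply mul_le_mul_of_nonneg_left (hfSt_bd x B hbx n k); positivity
        _ = (D * B * |μ|⁻¹) * r1 ^ k := by rw [hr1def]; ring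
    have hgbb : ∀ (x : ℤ → Ed d) (B : ℝ), (∀ m : ℤ, N (m:ℝ) (x m) ≤ B) →
        ∀ (n : ℤ) (k : ℕ),
        N (n:ℝ) ((μ⁻¹) ^ k • fSt T P x n k) ≤ (D * B) * r1 ^ k := by
      intro x B hbx n k
      rw [map_smul_eq_mul, Real.norm_eq_abs, abs_pow, abs_inv]
      calc |μ|⁻¹ ^ k * N (n:ℝ) (fSt T P x n k)
          ≤ |μ|⁻¹ ^ k * (D * B * Real.exp (-lam) ^ k) := by
            apply mul_le_mul_of_nonneg_left (hfSt_bd x B hbx n k); positivity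
        _ = (D * B) * r1 ^ k := by rw [hr1def]; ring
    have hunb : ∀ (x : ℤ → Ed d) (B : ℝ), (∀ m : ℤ, N (m:ℝ) (x m) ≤ B) →
        ∀ (n : ℤ) (k : ℕ),
        N (n:ℝ) (μ ^ k • fUn T P x n (k + 1)) ≤ (D * B * Real.exp (-lam)) * r2 ^ k := by
      intro x B hbx n k
      rw [map_smul_eq_mul, Real.norm_eq_abs, abs_pow]
      calc |μ| ^ k * N (n:ℝ) (fUn T P x n (k + 1))
          ≤ |μ| ^ k * (D * B * Real.exp (-lam) ^ (k + 1)) := by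
            apply mul_le_mul_of_nonneg_left (hfUn_bd x B hbx n (k + 1)); positivity
        _ = (D * B * Real.exp (-lam)) * r2 ^ k := by rw [hr2def]; ring
    have hwbb : ∀ (x : ℤ → Ed d) (B : ℝ), (∀ m : ℤ, N (m:ℝ) (x m) ≤ B) →
        ∀ (n : ℤ) (k : ℕ),
        N (n:ℝ) (μ ^ k • fUn T P x n k) ≤ (D * B) * r2 ^ k := by
      intro x B hbx n k
      rw [map_smul_eq_mul, Real.norm_eq_abs, abs_pow]
      calc |μ| ^ k * N (n:ℝ) (fUn T P x n k)
          ≤ |μ| ^ k * (D * B * Real.exp (-lam) ^ k) := by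
            apply mul_le_mul_of_nonneg_left (hfUn_bd x B hbx n k); positivity
        _ = (D * B) * r2 ^ k := by rw [hr2def]; ring
    -- summability
    have hsumSt : ∀ (x : ℤ → Ed d) (B : ℝ), (∀ m : ℤ, N (m:ℝ) (x m) ≤ B) →
        ∀ n : ℤ, Summable fun k : ℕ => (μ⁻¹) ^ (k + 1) • fSt T P x n k :=
      fun x B hbx n => summable_of_seminorm_geom (N (n:ℝ)) (hlowN (n:ℝ)) _ _ _
        hr1nn hr1lt (hstb x B hbx n)
    have hsumG : ∀ (x : ℤ → Ed d) (B : ℝ), (∀ m : ℤ, N (m:ℝ) (x m) ≤ B) →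
        ∀ n : ℤ, Summable fun k : ℕ => (μ⁻¹) ^ k • fSt T P x n k :=
      fun x B hbx n => summable_of_seminorm_geom (N (n:ℝ)) (hlowN (n:ℝ)) _ _ _
        hr1nn hr1lt (hgbb x B hbx n)
    have hsumUn : ∀ (x : ℤ → Ed d) (B : ℝ), (∀ m : ℤ, N (m:ℝ) (x m) ≤ B) →
        ∀ n : ℤ, Summable fun k : ℕ => μ ^ k • fUn T P x n (k + 1) :=
      fun x B hbx n => summable_of_seminorm_geom (N (n:ℝ)) (hlowN (n:ℝ)) _ _ _
        hr2nn hr2lt (hunb x B hbx n)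
    have hsumW : ∀ (x : ℤ → Ed d) (B : ℝ), (∀ m : ℤ, N (m:ℝ) (x m) ≤ B) →
        ∀ n : ℤ, Summable fun k : ℕ => μ ^ k • fUn T P x n k :=
      fun x B hbx n => summable_of_seminorm_geom (N (n:ℝ)) (hlowN (n:ℝ)) _ _ _
        hr2nn hr2lt (hwbb x B hbx n)
    -- norm bound on the Green operator
    have hGb : ∀ (x : ℤ → Ed d) (B : ℝ), (∀ m : ℤ, N (m:ℝ) (x m) ≤ B) →
        ∀ n : ℤ, N (n:ℝ) (GOp T P μ x n) ≤
          (D * |μ|⁻¹ * (1 - r1)⁻¹ + D * Real.exp (-lam) * (1 - r2)⁻¹) * B := by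
      intro x B hbx n
      have hSst : N (n:ℝ) (Sst T P μ x n) ≤ (D * B * |μ|⁻¹) * (1 - r1)⁻¹ := by
        have h := seminorm_tsum_le (N (n:ℝ)) (hcont n) _
          (fun k => (D * B * |μ|⁻¹) * r1 ^ k)
          (hsumSt x B hbx n) ((summable_geometric_of_lt_one hr1nn hr1lt).mul_left _)
          (hstb x B hbx n)
        rw [tsum_mul_left, tsum_geometric_of_lt_one hr1nn hr1lt] at h
        exact h
      have hSun : N (n:ℝ) (Sun T P μ x n) ≤ (D * B * Real.exp (-lam)) * (1 - r2)⁻¹ := by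
        have h := seminorm_tsum_le (N (n:ℝ)) (hcont n) _
          (fun k => (D * B * Real.exp (-lam)) * r2 ^ k)
          (hsumUn x B hbx n) ((summable_geometric_of_lt_one hr2nn hr2lt).mul_left _)
          (hunb x B hbx n)
        rw [tsum_mul_left, tsum_geometric_of_lt_one hr2nn hr2lt] at h
        exact h
      simp only [GOp]
      calc N (n:ℝ) (Sst T P μ x n - Sun T P μ x n)
          ≤ N (n:ℝ) (Sst T P μ x n) + N (n:ℝ) (Sun T P μ x n) := map_sub_le_add _ _ _
        _ ≤ (D * B * |μ|⁻¹) * (1 - r1)⁻¹ + (D * B * Real.exp (-lam)) * (1 - r2)⁻¹ :=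
            add_le_add hSst hSun
        _ = (D * |μ|⁻¹ * (1 - r1)⁻¹ + D * Real.exp (-lam) * (1 - r2)⁻¹) * B := by ring
    -- the Green operator as a bounded operator on Y∞
    have hmem : ∀ x : Yinf 𝒩, GOp T P μ x.seq ∈ YinfSubmodule 𝒩 := by
      intro x
      refine ⟨(D * |μ|⁻¹ * (1 - r1)⁻¹ + D * Real.exp (-lam) * (1 - r2)⁻¹) * ‖x‖,
        fun n => ?_⟩
      rw [h𝒩]
      exact hGb x.seq ‖x‖ (hbd x) n
    set Rlin : Yinf 𝒩 →ₗ[ℝ] Yinf 𝒩 :=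
      { toFun := fun x => ⟨GOp T P μ x.seq, hmem x⟩
        map_add' := by
          intro x y
          apply Subtype.ext
          funext n
          have hseq : (x + y).seq = fun m => x.seq m + y.seq m := rfl
          show GOp T P μ (x + y).seq n = GOp T P μ x.seq n + GOp T P μ y.seq n
          rw [hseq]
          simp only [GOp]
          rw [Sst_add _ _ _ (hsumSt x.seq ‖x‖ (hbd x) n) (hsumSt y.seq ‖y‖ (hbd y) n),
            Sun_add _ _ _ (hsumUn x.seq ‖x‖ (hbd x) n) (hsumUn y.seq ‖y‖ (hbd y) n)]
          abel
        map_smul' := by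
          intro c x
          apply Subtype.ext
          funext n
          have hseq : (c • x).seq = fun m => c • x.seq m := rfl
          show GOp T P μ (c • x).seq n = c • GOp T P μ x.seq n
          rw [hseq]
          simp only [GOp]
          rw [Sst_smul c _ _ (hsumSt x.seq ‖x‖ (hbd x) n),
            Sun_smul c _ _ (hsumUn x.seq ‖x‖ (hbd x) n), smul_sub] } with hRlindef
    have hRbound : ∀ x : Yinf 𝒩,
        ‖Rlin x‖ ≤ (D * |μ|⁻¹ * (1 - r1)⁻¹ + D * Real.exp (-lam) * (1 - r2)⁻¹) * ‖x‖ := by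
      intro x
      rw [Yinf.norm_def]
      refine ciSup_le fun n => ?_
      have hh : (Rlin x).seq n = GOp T P μ x.seq n := rfl
      rw [hh, h𝒩]
      exact hGb x.seq ‖x‖ (hbd x) n
    set Rop : Yinf 𝒩 →L[ℝ] Yinf 𝒩 :=
      Rlin.mkContinuous (D * |μ|⁻¹ * (1 - r1)⁻¹ + D * Real.exp (-lam) * (1 - r2)⁻¹)
        hRbound with hRopdef
    have hRseq : ∀ (x : Yinf 𝒩) (m : ℤ), (Rop x).seq m = GOp T P μ x.seq m :=
      fun x m => rfl
    set Lop : Yinf 𝒩 →L[ℝ] Yinf 𝒩 := algebraMap ℝ (Yinf 𝒩 →L[ℝ] Yinf 𝒩) μ - 𝔸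
      with hLopdef
    have hLseq : ∀ (z : Yinf 𝒩) (n : ℤ),
        (Lop z).seq n = μ • z.seq n - T (n:ℝ) ((n - 1 : ℤ):ℝ) (z.seq (n - 1)) := by
      intro z n
      have h1 : Lop z = μ • z - 𝔸 z := by
        rw [hLopdef, ContinuousLinearMap.sub_apply]
        congr 1
      rw [h1]
      have h2 : (μ • z - 𝔸 z).seq n = (μ • z).seq n - (𝔸 z).seq n := rfl
      rw [h2, Yinf.seq_smul, h𝔸]
    -- right inverse identity
    have hLR : ∀ x : Yinf 𝒩, Lop (Rop x) = x := by
      intro x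
      apply Subtype.ext
      funext n
      show (Lop (Rop x)).seq n = x.seq n
      rw [hLseq, hRseq, hRseq]
      simp only [GOp]
      rw [smul_sub, map_sub]
      have h1 := key_st hT_id hT_comp hμ0 x.seq n
        (fun m => hsumSt x.seq ‖x‖ (hbd x) m) (hsumG x.seq ‖x‖ (hbd x) n)
      have h2 := key_un hT_id hT_comp x.seq n
        (fun m => hsumUn x.seq ‖x‖ (hbd x) m) (hsumW x.seq ‖x‖ (hbd x) n)
      calc μ • Sst T P μ x.seq n - μ • Sun T P μ x.seq n -
            (T (n:ℝ) ((n - 1 : ℤ):ℝ) (Sst T P μ x.seq (n - 1)) -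
             T (n:ℝ) ((n - 1 : ℤ):ℝ) (Sun T P μ x.seq (n - 1)))
          = (μ • Sst T P μ x.seq n -
              T (n:ℝ) ((n - 1 : ℤ):ℝ) (Sst T P μ x.seq (n - 1))) -
            (μ • Sun T P μ x.seq n -
              T (n:ℝ) ((n - 1 : ℤ):ℝ) (Sun T P μ x.seq (n - 1))) := by abel
        _ = P (n:ℝ) (x.seq n) - -(x.seq n - P (n:ℝ) (x.seq n)) := by rw [h1, h2]
        _ = x.seq n := by abel
    -- kernel of Lop is trivial
    have hker : ∀ y : Yinf 𝒩, Lop y = 0 → y = 0 := by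
      intro y hy
      have hy' : ∀ n : ℤ, T (n:ℝ) ((n - 1 : ℤ):ℝ) (y.seq (n - 1)) = μ • y.seq n := by
        intro n
        have h : (Lop y).seq n = (0 : Yinf 𝒩).seq n := by rw [hy]
        rw [hLseq] at h
        have h0 : (0 : Yinf 𝒩).seq n = (0 : Ed d) := rfl
        rw [h0] at h
        exact (sub_eq_zero.mp h).symm
      have hiter : ∀ (k : ℕ) (n : ℤ),
          T (n:ℝ) ((n - k : ℤ):ℝ) (y.seq (n - k)) = μ ^ k • y.seq n := by
        intro k
        induction k with
        | zero =>
          intro n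
          have h0 : ((n - (0:ℕ) : ℤ)) = n := by simp
          rw [h0, hT_id]
          simp
        | succ k ih =>
          intro n
          have hz : (n - ((k:ℕ) + 1 : ℕ) : ℤ) = (n - 1) - (k:ℕ) := by push_cast; ring
          rw [hz]
          have hcomp := DFunLike.congr_fun
            (hT_comp (n:ℝ) ((n - 1 : ℤ):ℝ) (((n - 1) - (k:ℕ) : ℤ):ℝ))
            (y.seq ((n - 1) - (k:ℕ)))
          have hcomp' : T (n:ℝ) (((n - 1) - (k:ℕ) : ℤ):ℝ) (y.seq ((n - 1) - (k:ℕ))) =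
              T (n:ℝ) ((n - 1 : ℤ):ℝ)
                (T ((n - 1 : ℤ):ℝ) (((n - 1) - (k:ℕ) : ℤ):ℝ) (y.seq ((n - 1) - (k:ℕ)))) := by
            rw [← hcomp]; rfl
          rw [hcomp', ih (n - 1), map_smul, hy' n, smul_smul]
          congr 1
      have hstz : ∀ n : ℤ, P (n:ℝ) (y.seq n) = 0 := by
        intro n
        have hNb : ∀ k : ℕ, N (n:ℝ) (P (n:ℝ) (y.seq n)) ≤ (D * ‖y‖) * r1 ^ k := by
          intro k
          have hle : ((n - k : ℤ) : ℝ) ≤ (n : ℝ) := by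
            push_cast; linarith [Nat.cast_nonneg (α := ℝ) k]
          have h2 := hs (n:ℝ) ((n - k : ℤ):ℝ) (y.seq (n - k)) hle
          have hPy : T (n:ℝ) ((n - k : ℤ):ℝ) (P ((n - k : ℤ):ℝ) (y.seq (n - k))) =
              μ ^ k • P (n:ℝ) (y.seq n) := by
            have hc := DFunLike.congr_fun (hP_comm (n:ℝ) ((n - k : ℤ):ℝ)) (y.seq (n - k))
            have hc' : T (n:ℝ) ((n - k : ℤ):ℝ) (P ((n - k : ℤ):ℝ) (y.seq (n - k))) =
                P (n:ℝ) (T (n:ℝ) ((n - k : ℤ):ℝ) (y.seq (n - k))) := hc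
            rw [hc', hiter k n, map_smul]
          rw [hPy] at h2
          have harg : -lam * ((n:ℝ) - ((n - k : ℤ):ℝ)) = (k : ℕ) * (-lam) := by
            push_cast; ring
          rw [harg, Real.exp_nat_mul, map_smul_eq_mul, Real.norm_eq_abs, abs_pow] at h2
          have h3 : |μ| ^ k * N (n:ℝ) (P (n:ℝ) (y.seq n)) ≤
              D * Real.exp (-lam) ^ k * ‖y‖ := by
            calc |μ| ^ k * N (n:ℝ) (P (n:ℝ) (y.seq n))
                ≤ D * Real.exp (-lam) ^ k * N ((n - k : ℤ):ℝ) (y.seq (n - k)) := h2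
              _ ≤ D * Real.exp (-lam) ^ k * ‖y‖ := by
                  apply mul_le_mul_of_nonneg_left (hbd y (n - k)); positivity
          calc N (n:ℝ) (P (n:ℝ) (y.seq n))
              = |μ|⁻¹ ^ k * (|μ| ^ k * N (n:ℝ) (P (n:ℝ) (y.seq n))) := by
                rw [← mul_assoc, ← mul_pow, inv_mul_cancel₀ (ne_of_gt hμpos),
                  one_pow, one_mul]
            _ ≤ |μ|⁻¹ ^ k * (D * Real.exp (-lam) ^ k * ‖y‖) := by
                apply mul_le_mul_of_nonneg_left h3; positivity
            _ = (D * ‖y‖) * r1 ^ k := by rw [hr1def]; ring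
        have hten : Filter.Tendsto (fun k : ℕ => (D * ‖y‖) * r1 ^ k)
            Filter.atTop (nhds 0) := by
          have h := tendsto_pow_atTop_nhds_zero_of_lt_one hr1nn hr1lt
          have h' := h.const_mul (D * ‖y‖)
          simpa using h'
        have hle0 : N (n:ℝ) (P (n:ℝ) (y.seq n)) ≤ 0 :=
          ge_of_tendsto hten (Filter.Eventually.of_forall hNb)
        have hfin := le_trans (hlowN (n:ℝ) (P (n:ℝ) (y.seq n))) hle0
        exact norm_le_zero_iff.mp hfin
      have hunz : ∀ n : ℤ, y.seq n - P (n:ℝ) (y.seq n) = 0 := by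
        intro n
        have hNb : ∀ k : ℕ, N (n:ℝ) (y.seq n - P (n:ℝ) (y.seq n)) ≤
            (D * ‖y‖) * r2 ^ k := by
          intro k
          have hzz : ((n + k : ℤ) - (k:ℕ) : ℤ) = n := by push_cast; ring
          have hA : T ((n + k : ℤ):ℝ) ((n:ℤ):ℝ) (y.seq n) = μ ^ k • y.seq (n + k) := by
            have h := hiter k (n + k)
            rw [hzz] at h
            exact h
          have hle : (n : ℝ) ≤ ((n + k : ℤ) : ℝ) := by
            push_cast; linarith [Nat.cast_nonneg (α := ℝ) k]
          have h2 := hu (n:ℝ) ((n + k : ℤ):ℝ) (y.seq (n + k)) hle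
          have hTT : ∀ v : Ed d,
              T (n:ℝ) ((n + k : ℤ):ℝ) (T ((n + k : ℤ):ℝ) ((n:ℤ):ℝ) v) = v := by
            intro v
            have h := DFunLike.congr_fun (hT_comp (n:ℝ) ((n + k : ℤ):ℝ) ((n:ℤ):ℝ)) v
            have h' : T (n:ℝ) ((n + k : ℤ):ℝ) (T ((n + k : ℤ):ℝ) ((n:ℤ):ℝ) v) =
                T (n:ℝ) ((n:ℤ):ℝ) v := h
            rw [h', hT_id]
            rfl
          have hEq : μ ^ k • T (n:ℝ) ((n + k : ℤ):ℝ)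
              (y.seq (n + k) - P ((n + k : ℤ):ℝ) (y.seq (n + k))) =
              y.seq n - P (n:ℝ) (y.seq n) := by
            rw [← map_smul, smul_sub, ← hA, ← map_smul, ← hA]
            have hPT : T (n:ℝ) ((n + k : ℤ):ℝ)
                (P ((n + k : ℤ):ℝ) (T ((n + k : ℤ):ℝ) ((n:ℤ):ℝ) (y.seq n))) =
                P (n:ℝ) (y.seq n) := by
              have hc := DFunLike.congr_fun (hP_comm (n:ℝ) ((n + k : ℤ):ℝ))
                (T ((n + k : ℤ):ℝ) ((n:ℤ):ℝ) (y.seq n))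
              have hc' : T (n:ℝ) ((n + k : ℤ):ℝ)
                  (P ((n + k : ℤ):ℝ) (T ((n + k : ℤ):ℝ) ((n:ℤ):ℝ) (y.seq n))) =
                  P (n:ℝ) (T (n:ℝ) ((n + k : ℤ):ℝ)
                    (T ((n + k : ℤ):ℝ) ((n:ℤ):ℝ) (y.seq n))) := hc
              rw [hc', hTT]
            rw [map_sub, hTT, hPT]
          have harg : -lam * (((n + k : ℤ):ℝ) - (n:ℝ)) = (k : ℕ) * (-lam) := by
            push_cast; ring
          rw [harg, Real.exp_nat_mul] at h2
          calc N (n:ℝ) (y.seq n - P (n:ℝ) (y.seq n))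
              = N (n:ℝ) (μ ^ k • T (n:ℝ) ((n + k : ℤ):ℝ)
                  (y.seq (n + k) - P ((n + k : ℤ):ℝ) (y.seq (n + k)))) := by rw [hEq]
            _ = |μ| ^ k * N (n:ℝ) (T (n:ℝ) ((n + k : ℤ):ℝ)
                  (y.seq (n + k) - P ((n + k : ℤ):ℝ) (y.seq (n + k)))) := by
                rw [map_smul_eq_mul, Real.norm_eq_abs, abs_pow]
            _ ≤ |μ| ^ k * (D * Real.exp (-lam) ^ k * ‖y‖) := by
                apply mul_le_mul_of_nonneg_left _ (by positivity)
                calc N (n:ℝ) (T (n:ℝ) ((n + k : ℤ):ℝ)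
                      (y.seq (n + k) - P ((n + k : ℤ):ℝ) (y.seq (n + k))))
                    ≤ D * Real.exp (-lam) ^ k * N ((n + k : ℤ):ℝ) (y.seq (n + k)) := h2
                  _ ≤ D * Real.exp (-lam) ^ k * ‖y‖ := by
                      apply mul_le_mul_of_nonneg_left (hbd y (n + k)); positivity
            _ = (D * ‖y‖) * r2 ^ k := by rw [hr2def]; ring
        have hten : Filter.Tendsto (fun k : ℕ => (D * ‖y‖) * r2 ^ k)
            Filter.atTop (nhds 0) := by
          have h := tendsto_pow_atTop_nhds_zero_of_lt_one hr2nn hr2lt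
          have h' := h.const_mul (D * ‖y‖)
          simpa using h'
        have hle0 : N (n:ℝ) (y.seq n - P (n:ℝ) (y.seq n)) ≤ 0 :=
          ge_of_tendsto hten (Filter.Eventually.of_forall hNb)
        have hfin := le_trans (hlowN (n:ℝ) (y.seq n - P (n:ℝ) (y.seq n))) hle0
        exact norm_le_zero_iff.mp hfin
      apply Subtype.ext
      funext n
      show y.seq n = 0
      have hdec : y.seq n = (y.seq n - P (n:ℝ) (y.seq n)) + P (n:ℝ) (y.seq n) := by abel
      rw [hdec, hunz n, hstz n]
      simp
    have hinjL : Function.Injective Lop := by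
      intro a b hab
      have h : Lop (a - b) = 0 := by rw [map_sub, hab, sub_self]
      exact sub_eq_zero.mp (hker (a - b) h)
    have hRL : ∀ x : Yinf 𝒩, Rop (Lop x) = x := by
      intro x
      apply hinjL
      rw [hLR (Lop x)]
    refine isUnit_iff_exists.mpr ⟨Rop, ?_, ?_⟩
    · apply ContinuousLinearMap.ext
      intro x
      simp only [ContinuousLinearMap.mul_apply, ContinuousLinearMap.one_apply]
      exact hLR x
    · apply ContinuousLinearMap.ext
      intro x
      simp only [ContinuousLinearMap.mul_apply, ContinuousLinearMap.one_apply]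
      exact hRL x
  have h1abs : Real.exp (-lam) < |(1:ℝ)| ∧ |(1:ℝ)| < Real.exp lam := by
    rw [abs_one]
    constructor
    · calc Real.exp (-lam) < Real.exp 0 := Real.exp_lt_exp.mpr (by linarith)
        _ = 1 := Real.exp_zero
    · calc (1:ℝ) = Real.exp 0 := Real.exp_zero.symm
        _ < Real.exp lam := Real.exp_lt_exp.mpr hlam
  have hm1abs : Real.exp (-lam) < |(-1:ℝ)| ∧ |(-1:ℝ)| < Real.exp lam := by
    rw [abs_neg]; exact h1abs
  refine ⟨fun μ a b => ⟨spectrum.notMem_iff.mpr (main μ a b), main μ a b⟩, ?_, ?_⟩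
  · exact spectrum.notMem_iff.mpr (main 1 h1abs.1 h1abs.2)
  · exact spectrum.notMem_iff.mpr (main (-1) hm1abs.1 hm1abs.2)

end
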